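/- Let α > 0, σ ≥ 1, r > 0 and μ > 0. Then μ^σ / (α + μ^(σr))^(1/r) ≤ μ / α^(1/(σr)). -/

import Mathlib

theorem stmt_1 (α σ r μ : ℝ) (hα : 0 < α) (hσ : 1 ≤ σ) (hr : 0 < r) (hμ : 0 < μ) :
    μ ^ σ / (α + μ ^ (σ * r)) ^ (1 / r) ≤ μ / α ^ (1 / (σ * r)) := by
  have hσ0 : 0 < σ := lt_of_lt_of_le one_pos hσ
  have hσr : 0 < σ * r := mul_pos hσ0 hr
  have hx : (0:ℝ) < μ ^ (σ * r) := Real.rpow_pos_of_pos hμ _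
  have hA : (0:ℝ) < α + μ ^ (σ * r) := by positivity
  have key : α ^ (1/σ) * (μ ^ (σ * r)) ^ ((σ - 1)/σ) ≤ α + μ ^ (σ * r) := by
    calc α ^ (1/σ) * (μ ^ (σ * r)) ^ ((σ - 1)/σ)
        ≤ (1/σ) * α + ((σ - 1)/σ) * (μ ^ (σ * r)) :=
          Real.geom_mean_le_arith_mean2_weighted (by positivity)
            (div_nonneg (by linarith) hσ0.le) hα.le hx.le (by field_simp; ring)
      _ ≤ α + μ ^ (σ * r) := by
          have h1 : (1/σ) * α ≤ α := by
            have : (1:ℝ)/σ ≤ 1 := by rw [div_le_one hσ0]; exact hσ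
            nlinarith
          have h2 : ((σ - 1)/σ) * (μ ^ (σ * r)) ≤ μ ^ (σ * r) := by
            have : (σ - 1)/σ ≤ 1 := by rw [div_le_one hσ0]; linarith
            nlinarith
          linarith
  have key2 : α * μ ^ (σ * r * (σ - 1)) ≤ (α + μ ^ (σ * r)) ^ σ := by
    have := Real.rpow_le_rpow (by positivity) key hσ0.le
    rw [Real.mul_rpow (by positivity) (by positivity),
      ← Real.rpow_mul hα.le, ← Real.rpow_mul hx.le] at this
    rw [one_div, inv_mul_cancel₀ hσ0.ne', Real.rpow_one] at this
    rw [div_mul_cancel₀ _ hσ0.ne', ← Real.rpow_mul hμ.le] at this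
    exact this
  rw [div_le_div_iff₀ (by positivity) (by positivity)]
  rw [← Real.rpow_le_rpow_iff (by positivity) (by positivity) hσr]
  have e1 : (μ ^ σ * α ^ (1 / (σ * r))) ^ (σ * r)
      = μ ^ (σ * (σ * r)) * α := by
    rw [Real.mul_rpow (by positivity) (by positivity),
      ← Real.rpow_mul hμ.le, ← Real.rpow_mul hα.le,
      one_div, inv_mul_cancel₀ hσr.ne', Real.rpow_one]
  have e2 : (μ * (α + μ ^ (σ * r)) ^ (1 / r)) ^ (σ * r)
      = μ ^ (σ * r) * (α + μ ^ (σ * r)) ^ σ := by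
    rw [Real.mul_rpow hμ.le (by positivity), ← Real.rpow_mul hA.le]
    congr 1
    field_simp
  rw [e1, e2]
  have e3 : μ ^ (σ * (σ * r)) = μ ^ (σ * r) * μ ^ (σ * r * (σ - 1)) := by
    rw [← Real.rpow_add hμ]; ring_nf
  rw [e3, mul_assoc]
  calc μ ^ (σ * r) * (μ ^ (σ * r * (σ - 1)) * α)
      = μ ^ (σ * r) * (α * μ ^ (σ * r * (σ - 1))) := by ring
    _ ≤ μ ^ (σ * r) * (α + μ ^ (σ * r)) ^ σ := mul_le_mul_of_nonneg_left key2 hx.le
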